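/- Let β_L, β_R > 0 and define 𝛃(p₁) := β_L if p₁ > 0 and β_R if p₁ < 0. Then the function p ↦ ‖p‖/(e^{𝛃(p₁)‖p‖} − 1) is integrable on ℝ³ and (2π)^{−3}·∫_{ℝ³} ‖p‖/(e^{𝛃(p₁)‖p‖} − 1) dp = (π²/60)·(1/β_L⁴ + 1/β_R⁴). -/

import Mathlib

open MeasureTheory Real Set


lemma exp_sub_one_ge_pow5 {x : ℝ} (hx : 0 ≤ x) : x ^ 5 / 120 ≤ Real.exp x - 1 := by
  have h := Real.sum_le_exp_of_nonneg hx 6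
  norm_num [Finset.sum_range_succ, Nat.factorial] at h
  have h2 : (0:ℝ) ≤ x ^ 2 := by positivity
  have h3 : (0:ℝ) ≤ x ^ 3 := by positivity
  have h4 : (0:ℝ) ≤ x ^ 4 := by positivity
  nlinarith [h]

lemma bose_nonneg {β r : ℝ} (hβ : 0 ≤ β) (hr : 0 ≤ r) :
    0 ≤ r / (Real.exp (β * r) - 1) :=
  div_nonneg hr (by simpa using Real.one_le_exp (by positivity))

lemma bose_bound {β r : ℝ} (hβ : 0 < β) (hr : 0 ≤ r) :
    r / (Real.exp (β * r) - 1) ≤ (16 / β + 1920 / β ^ 5) * (1 + r) ^ (-(4:ℝ)) := by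
  have h1r : (0:ℝ) < 1 + r := by linarith
  rw [Real.rpow_neg h1r.le, show ((4:ℝ)) = ((4:ℕ):ℝ) by norm_num, Real.rpow_natCast,
    ← div_eq_mul_inv]
  rcases eq_or_lt_of_le hr with h | hr
  · rw [← h]
    simp
    positivity
  have hd : 0 < Real.exp (β * r) - 1 := by
    have := Real.add_one_lt_exp (show β * r ≠ 0 by positivity)
    nlinarith [mul_pos hβ hr]
  have hden : β * r ≤ Real.exp (β * r) - 1 := by
    have := Real.add_one_le_exp (β * r); linarith
  have hden5 : (β * r) ^ 5 / 120 ≤ Real.exp (β * r) - 1 := exp_sub_one_ge_pow5 (by positivity)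
  have hC1 : (0:ℝ) ≤ 16 / β := by positivity
  have hC2 : (0:ℝ) ≤ 1920 / β ^ 5 := by positivity
  rw [div_le_div_iff₀ hd (by positivity)]
  rcases le_total r 1 with h | h
  · have e16 : (1 + r) ^ 4 ≤ 16 := by
      calc (1 + r) ^ 4 ≤ 2 ^ 4 := pow_le_pow_left₀ (by linarith) (by linarith) 4
        _ = 16 := by norm_num
    calc r * (1 + r) ^ 4 ≤ r * 16 := mul_le_mul_of_nonneg_left e16 hr.le
      _ = (16 / β) * (β * r) := by field_simp
      _ ≤ (16 / β) * (Real.exp (β * r) - 1) := mul_le_mul_of_nonneg_left hden hC1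
      _ ≤ (16 / β + 1920 / β ^ 5) * (Real.exp (β * r) - 1) := by
          apply mul_le_mul_of_nonneg_right _ hd.le; linarith
  · have e16 : (1 + r) ^ 4 ≤ 16 * r ^ 4 := by
      calc (1 + r) ^ 4 ≤ (2 * r) ^ 4 := pow_le_pow_left₀ (by linarith) (by linarith) 4
        _ = 16 * r ^ 4 := by ring
    calc r * (1 + r) ^ 4 ≤ r * (16 * r ^ 4) := mul_le_mul_of_nonneg_left e16 hr.le
      _ = (1920 / β ^ 5) * ((β * r) ^ 5 / 120) := by field_simp; ring
      _ ≤ (1920 / β ^ 5) * (Real.exp (β * r) - 1) := mul_le_mul_of_nonneg_left hden5 hC2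
      _ ≤ (16 / β + 1920 / β ^ 5) * (Real.exp (β * r) - 1) := by
          apply mul_le_mul_of_nonneg_right _ hd.le; linarith


-- integrability on Ioi 0 of r^3/(e^{βr}-1)
lemma bose_integrableOn {β : ℝ} (hβ : 0 < β) :
    IntegrableOn (fun r : ℝ => r ^ 3 / (Real.exp (β * r) - 1)) (Ioi 0) := by
  have base : IntegrableOn (fun r : ℝ => 2 / β * (r ^ 2 * Real.exp (-(β/2) * r))) (Ioi 0) := by
    have h := (integrableOn_rpow_mul_exp_neg_mul_rpow (p := 1) (s := 2) (b := β/2)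
      (by norm_num) zero_lt_one (by positivity))
    refine ((h.congr_fun (fun x hx => ?_) measurableSet_Ioi).const_mul _)
    rw [Real.rpow_one, show ((2:ℝ)) = ((2:ℕ):ℝ) by norm_num, Real.rpow_natCast]
  refine base.mono' ?_ ?_
  · apply Measurable.aestronglyMeasurable
    exact (measurable_id.pow_const 3).div
      (((measurable_const.mul measurable_id).exp).sub measurable_const)
  · filter_upwards [ae_restrict_mem measurableSet_Ioi] with r hr
    simp only [mem_Ioi] at hr
    have hd : 0 < Real.exp (β * r) - 1 := by
      have := Real.add_one_lt_exp (show β * r ≠ 0 by positivity)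
      nlinarith [mul_pos hβ hr]
    rw [Real.norm_eq_abs, abs_of_nonneg (div_nonneg (by positivity) hd.le)]
    -- e^{βr} - 1 ≥ (βr/2) e^{βr/2}
    have key : (β / 2 * r) * Real.exp (β / 2 * r) ≤ Real.exp (β * r) - 1 := by
      have h1 : β / 2 * r + 1 ≤ Real.exp (β / 2 * r) := Real.add_one_le_exp _
      have h2 : Real.exp (β / 2 * r) * Real.exp (β / 2 * r) = Real.exp (β * r) := by
        rw [← Real.exp_add]; ring_nf
      nlinarith [Real.exp_pos (β / 2 * r), mul_pos (mul_pos (half_pos hβ) hr) (Real.exp_pos (β/2*r))]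
    rw [div_le_iff₀ hd]
    have hexp : Real.exp (-(β/2) * r) * Real.exp (β/2 * r) = 1 := by
      rw [← Real.exp_add]; ring_nf; exact Real.exp_zero
    have h1 : 2/β * (r ^ 2 * Real.exp (-(β/2)*r)) * (β/2*r * Real.exp (β/2*r))
        = (2/β * (β/2)) * r^3 * (Real.exp (-(β/2)*r) * Real.exp (β/2*r)) := by ring
    have h2 : 2/β * (β/2) = 1 := by field_simp
    calc r ^ 3 = (2/β * (r^2 * Real.exp (-(β/2)*r))) * ((β/2*r) * Real.exp (β/2*r)) := by
          rw [h1, hexp, h2, one_mul, mul_one]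
      _ ≤ (2/β * (r^2 * Real.exp (-(β/2)*r))) * (Real.exp (β * r) - 1) := by
          apply mul_le_mul_of_nonneg_left key (by positivity)

lemma hasSum_inv_pow4 : HasSum (fun n : ℕ => 1 / ((n:ℝ) + 1) ^ 4) (π ^ 4 / 90) := by
  have h := hasSum_zeta_four
  rw [← hasSum_nat_add_iff' 1] at h
  simpa using h

lemma bose_integral {β : ℝ} (hβ : 0 < β) :
    ∫ r in Ioi (0:ℝ), r ^ 3 / (Real.exp (β * r) - 1) = π ^ 4 / (15 * β ^ 4) := by
  set F : ℕ → ℝ → ℝ := fun n r => r ^ 3 * Real.exp (-(((n:ℝ) + 1) * β) * r) with hF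
  have hFint : ∀ n : ℕ, Integrable (F n) (volume.restrict (Ioi 0)) := by
    intro n
    have h := (integrableOn_rpow_mul_exp_neg_mul_rpow (p := 1) (s := 3) (b := ((n:ℝ)+1)*β)
      (by norm_num) zero_lt_one (by positivity))
    refine h.congr_fun (fun x hx => ?_) measurableSet_Ioi
    beta_reduce
    rw [Real.rpow_one, show ((3:ℝ)) = ((3:ℕ):ℝ) by norm_num, Real.rpow_natCast]
  have hFval : ∀ n : ℕ, ∫ r in Ioi (0:ℝ), F n r = 6 / (((n:ℝ) + 1) * β) ^ 4 := by
    intro n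
    have h := integral_rpow_mul_exp_neg_mul_Ioi (a := 4) (r := ((n:ℝ)+1)*β)
      (by norm_num) (by positivity)
    rw [show ((4:ℝ) - 1) = ((3:ℕ):ℝ) by norm_num] at h
    simp_rw [Real.rpow_natCast] at h
    have : ∫ r in Ioi (0:ℝ), F n r = ∫ t in Ioi (0:ℝ), t ^ (3:ℕ) * Real.exp (-((((n:ℝ)+1)*β) * t)) := by
      refine setIntegral_congr_fun measurableSet_Ioi (fun x hx => ?_)
      simp [F, neg_mul]
    rw [this, h]
    rw [show ((4:ℝ)) = ((4:ℕ):ℝ) by norm_num, Real.rpow_natCast]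
    rw [show Real.Gamma ((4:ℕ):ℝ) = Real.Gamma (((3:ℕ):ℝ) + 1) by norm_num,
      Real.Gamma_nat_eq_factorial]
    norm_num [Nat.factorial]
    field_simp
  have hnorm : ∀ n : ℕ, ∫ r in Ioi (0:ℝ), ‖F n r‖ = 6 / (((n:ℝ) + 1) * β) ^ 4 := by
    intro n
    rw [← hFval n]
    refine setIntegral_congr_fun measurableSet_Ioi (fun x hx => ?_)
    simp only [mem_Ioi] at hx
    rw [Real.norm_eq_abs, abs_of_nonneg (by positivity)]
  have hsum : Summable (fun n : ℕ => ∫ r in Ioi (0:ℝ), ‖F n r‖) := by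
    simp_rw [hnorm]
    have : (fun n : ℕ => 6 / (((n:ℝ) + 1) * β) ^ 4)
        = fun n : ℕ => (6 / β ^ 4) * (1 / ((n:ℝ) + 1) ^ 4) := by
      funext n; field_simp
    rw [this]
    exact (hasSum_inv_pow4.summable).mul_left _
  have hkey := hasSum_integral_of_summable_integral_norm (μ := volume.restrict (Ioi 0)) hFint hsum
  -- identify the tsum with our function a.e.
  have htsum : ∫ r in Ioi (0:ℝ), (∑' n, F n r) = ∫ r in Ioi (0:ℝ), r ^ 3 / (Real.exp (β * r) - 1) := by
    refine setIntegral_congr_fun measurableSet_Ioi (fun r hr => ?_)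
    simp only [mem_Ioi] at hr
    have hq : Real.exp (-(β * r)) < 1 := by
      rw [Real.exp_lt_one_iff]; simp; positivity
    have hq0 : (0:ℝ) ≤ Real.exp (-(β * r)) := (Real.exp_pos _).le
    have hgeo : HasSum (fun n : ℕ => Real.exp (-(β*r)) ^ n) (1 - Real.exp (-(β*r)))⁻¹ :=
      hasSum_geometric_of_lt_one hq0 hq
    have hgeo1 : HasSum (fun n : ℕ => Real.exp (-(β*r)) ^ (n+1))
        ((1 - Real.exp (-(β*r)))⁻¹ - 1) := by
      have := (hasSum_nat_add_iff' 1).2 hgeo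
      simpa using this
    have hFr : HasSum (fun n => F n r) (r ^ 3 * ((1 - Real.exp (-(β*r)))⁻¹ - 1)) := by
      have := hgeo1.mul_left (r ^ 3)
      refine this.congr_fun (fun n => ?_)
      simp only [F]
      rw [← Real.exp_nat_mul]
      congr 1
      push_cast
      ring
    rw [hFr.tsum_eq]
    have hd : 0 < Real.exp (β * r) - 1 := by
      have := Real.add_one_lt_exp (show β * r ≠ 0 by positivity)
      nlinarith [mul_pos hβ hr]
    have he : Real.exp (-(β*r)) = (Real.exp (β*r))⁻¹ := Real.exp_neg _
    have hne : Real.exp (β * r) ≠ 0 := (Real.exp_pos _).ne'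
    rw [he]
    field_simp
    rw [div_sub_one (by rw [mul_comm]; exact hd.ne')]
    ring
  have := hkey.tsum_eq
  rw [htsum] at this
  rw [← this]
  have : (fun n : ℕ => ∫ r in Ioi (0:ℝ), F n r) = fun n : ℕ => (6 / β ^ 4) * (1 / ((n:ℝ) + 1) ^ 4) := by
    funext n; rw [hFval n]; field_simp
  rw [this, tsum_mul_left, hasSum_inv_pow4.tsum_eq]
  field_simp
  ring

lemma radial_integrable {β : ℝ} (hβ : 0 < β) :
    Integrable (fun p : EuclideanSpace ℝ (Fin 3) => ‖p‖ / (Real.exp (β * ‖p‖) - 1)) := by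
  have hbd : Integrable (fun p : EuclideanSpace ℝ (Fin 3) =>
      (16 / β + 1920 / β ^ 5) * (1 + ‖p‖) ^ (-(4:ℝ))) := by
    refine (integrable_one_add_norm ?_).const_mul _
    rw [finrank_euclideanSpace_fin]; norm_num
  refine hbd.mono' ?_ ?_
  · apply Measurable.aestronglyMeasurable
    exact measurable_norm.div (((measurable_const.mul measurable_norm).exp).sub measurable_const)
  · filter_upwards with p
    rw [Real.norm_eq_abs, abs_of_nonneg (bose_nonneg hβ.le (norm_nonneg p))]
    exact bose_bound hβ (norm_nonneg p)

lemma ball_vol : (volume (Metric.ball (0 : EuclideanSpace ℝ (Fin 3)) 1)).toReal = 4 * π / 3 := by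
  rw [EuclideanSpace.volume_ball]
  have hG : Real.Gamma ((Fintype.card (Fin 3)) / 2 + 1) = 3 / 4 * Real.sqrt π := by
    rw [Fintype.card_fin]
    push_cast
    rw [show ((3:ℝ)/2 + 1) = (3/2) + 1 by norm_num, Real.Gamma_add_one (by norm_num),
      show ((3:ℝ)/2) = (1/2) + 1 by norm_num, Real.Gamma_add_one (by norm_num),
      Real.Gamma_one_half_eq]
    ring
  rw [hG, Fintype.card_fin]
  have hs : Real.sqrt π > 0 := Real.sqrt_pos.2 pi_pos
  have h : Real.sqrt π ^ 3 / (3 / 4 * Real.sqrt π) = 4 * π / 3 := by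
    have : Real.sqrt π ^ 3 = π * Real.sqrt π := by
      rw [pow_succ, sq_sqrt pi_pos.le]
    rw [this]
    field_simp
  rw [h, ENNReal.toReal_mul, ENNReal.toReal_pow, ENNReal.toReal_ofReal (by norm_num),
    ENNReal.toReal_ofReal (by positivity)]
  norm_num

lemma radial_integral {β : ℝ} (hβ : 0 < β) :
    ∫ p : EuclideanSpace ℝ (Fin 3), ‖p‖ / (Real.exp (β * ‖p‖) - 1)
      = 4 * π ^ 5 / (15 * β ^ 4) := by
  have h := integral_fun_norm_addHaar (volume : Measure (EuclideanSpace ℝ (Fin 3)))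
    (fun r : ℝ => r / (Real.exp (β * r) - 1))
  rw [h, finrank_euclideanSpace_fin, measureReal_def, ball_vol]
  have : ∫ y in Ioi (0:ℝ), y ^ (3 - 1) • (y / (Real.exp (β * y) - 1))
      = ∫ y in Ioi (0:ℝ), y ^ 3 / (Real.exp (β * y) - 1) := by
    refine setIntegral_congr_fun measurableSet_Ioi (fun y hy => ?_)
    simp only [smul_eq_mul]
    rw [mul_div_assoc']
    norm_num
    ring_nf
  rw [this, bose_integral hβ]
  simp only [nsmul_eq_mul, smul_eq_mul]
  push_cast
  field_simp


local notation "E𝟛" => EuclideanSpace ℝ (Fin 3)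

lemma meas_coord : Measurable (fun p : E𝟛 => p 0) := (measurable_pi_apply 0).comp (WithLp.measurable_ofLp 2 _)

lemma null_hyperplane : volume {p : E𝟛 | p 0 = 0} = 0 := by
  have hset : {p : E𝟛 | p 0 = 0}
      = (LinearMap.ker ((EuclideanSpace.proj (0 : Fin 3) : E𝟛 →L[ℝ] ℝ) : E𝟛 →ₗ[ℝ] ℝ) :
        Submodule ℝ E𝟛) := by
    ext p
    simp [LinearMap.mem_ker]
  rw [hset]
  apply Measure.addHaar_submodule
  intro h
  rw [LinearMap.ker_eq_top] at h
  have h1 := congrArg (fun f => f (EuclideanSpace.single (0 : Fin 3) (1:ℝ))) h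
  simp at h1

lemma half_integral {g : E𝟛 → ℝ} (hg : Integrable g) (hsym : ∀ p : E𝟛, g (-p) = g p) :
    (∫ p in {p : E𝟛 | 0 < p 0}, g p) = (∫ p, g p) / 2 ∧
    (∫ p in {p : E𝟛 | 0 < p 0}ᶜ, g p) = (∫ p, g p) / 2 := by
  set S : Set E𝟛 := {p : E𝟛 | 0 < p 0} with hS
  have MS : MeasurableSet S := measurableSet_lt measurable_const meas_coord
  set T : Set E𝟛 := {p : E𝟛 | p 0 < 0} with hT
  have h1 : (∫ p in S, g p) = ∫ p in T, g p := by
    have hemb : MeasurableEmbedding (fun p : E𝟛 => -p) := (Homeomorph.neg E𝟛).measurableEmbedding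
    have hmp : MeasurePreserving (fun p : E𝟛 => -p) volume volume :=
      Measure.measurePreserving_neg _
    have key := hmp.setIntegral_preimage_emb hemb g T
    have hpre : (fun p : E𝟛 => -p) ⁻¹' T = S := by
      ext p
      simp only [mem_preimage, hT, hS, mem_setOf_eq]
      have : (-p) 0 = -(p 0) := rfl
      rw [this]
      constructor <;> intro <;> linarith
    rw [hpre] at key
    simp_rw [hsym] at key
    exact key
  have h2 : Sᶜ =ᵐ[volume] T := by
    refine measure_symmDiff_eq_zero_iff.1 ?_
    refine measure_mono_null (fun p hp => ?_) null_hyperplane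
    simp only [symmDiff_def, mem_union, mem_diff, mem_compl_iff, hS, hT, mem_setOf_eq] at hp
    simp only [mem_setOf_eq]
    rcases hp with ⟨h3, h4⟩ | ⟨h3, h4⟩
    · have h3' : ¬ (0:ℝ) < p 0 := h3
      have h4' : ¬ p 0 < 0 := h4
      linarith [not_lt.1 h3', not_lt.1 h4']
    · have h3' : p 0 < 0 := h3
      have h4' : (0:ℝ) < p 0 := not_not.1 h4
      linarith
  have h3 : (∫ p in Sᶜ, g p) = ∫ p in T, g p := setIntegral_congr_set h2
  have h4 : (∫ p in S, g p) + (∫ p in Sᶜ, g p) = ∫ p, g p :=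
    integral_add_compl MS hg
  rw [h3] at h4 ⊢
  rw [h1] at h4 ⊢
  constructor <;> linarith


/-- The expected energy density of the NESS: with `𝛃(p₁) = β_L` for
`p₁ > 0` and `β_R` for `p₁ < 0`, the function `p ↦ ‖p‖/(e^{𝛃(p₁)‖p‖} − 1)` is integrable
on `ℝ³` and `(2π)^{-3} ∫_{ℝ³} ‖p‖/(e^{𝛃(p₁)‖p‖} − 1) dp = (π²/60)(1/β_L⁴ + 1/β_R⁴)`. -/
theorem stmt17 (βL βR : ℝ) (hL : 0 < βL) (hR : 0 < βR) :
    Integrable (fun p : EuclideanSpace ℝ (Fin 3) =>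
      ‖p‖ / (Real.exp ((if 0 < p 0 then βL else βR) * ‖p‖) - 1)) ∧
    ((2 * π) ^ 3)⁻¹ * ∫ p : EuclideanSpace ℝ (Fin 3),
        ‖p‖ / (Real.exp ((if 0 < p 0 then βL else βR) * ‖p‖) - 1)
      = (π ^ 2 / 60) * (1 / βL ^ 4 + 1 / βR ^ 4) := by
  set S : Set (EuclideanSpace ℝ (Fin 3)) := {p | 0 < p 0} with hSdef
  have MS : MeasurableSet S := measurableSet_lt measurable_const meas_coord
  set C : ℝ := (16 / βL + 1920 / βL ^ 5) + (16 / βR + 1920 / βR ^ 5) with hC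
  have hInt : Integrable (fun p : EuclideanSpace ℝ (Fin 3) =>
      ‖p‖ / (Real.exp ((if 0 < p 0 then βL else βR) * ‖p‖) - 1)) := by
    have hbd : Integrable (fun p : EuclideanSpace ℝ (Fin 3) => C * (1 + ‖p‖) ^ (-(4:ℝ))) := by
      refine (integrable_one_add_norm ?_).const_mul _
      rw [finrank_euclideanSpace_fin]; norm_num
    refine hbd.mono' ?_ ?_
    · apply Measurable.aestronglyMeasurable
      have hb : Measurable (fun p : EuclideanSpace ℝ (Fin 3) => if 0 < p 0 then βL else βR) :=
        Measurable.ite MS measurable_const measurable_const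
      exact measurable_norm.div (((hb.mul measurable_norm).exp).sub measurable_const)
    · filter_upwards with p
      have hrp : (0:ℝ) ≤ (1 + ‖p‖) ^ (-(4:ℝ)) :=
        Real.rpow_nonneg (by positivity) _
      by_cases hp : 0 < p 0
      · rw [if_pos hp, Real.norm_eq_abs, abs_of_nonneg (bose_nonneg hL.le (norm_nonneg p))]
        refine (bose_bound hL (norm_nonneg p)).trans ?_
        apply mul_le_mul_of_nonneg_right _ hrp
        have : (0:ℝ) ≤ 16 / βR + 1920 / βR ^ 5 := by positivity
        rw [hC]; linarith
      · rw [if_neg hp, Real.norm_eq_abs, abs_of_nonneg (bose_nonneg hR.le (norm_nonneg p))]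
        refine (bose_bound hR (norm_nonneg p)).trans ?_
        apply mul_le_mul_of_nonneg_right _ hrp
        have : (0:ℝ) ≤ 16 / βL + 1920 / βL ^ 5 := by positivity
        rw [hC]; linarith
  refine ⟨hInt, ?_⟩
  have symL : ∀ p : EuclideanSpace ℝ (Fin 3),
      ‖-p‖ / (Real.exp (βL * ‖-p‖) - 1) = ‖p‖ / (Real.exp (βL * ‖p‖) - 1) := by
    intro p; rw [norm_neg]
  have symR : ∀ p : EuclideanSpace ℝ (Fin 3),
      ‖-p‖ / (Real.exp (βR * ‖-p‖) - 1) = ‖p‖ / (Real.exp (βR * ‖p‖) - 1) := by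
    intro p; rw [norm_neg]
  obtain ⟨hSL, -⟩ := half_integral (radial_integrable hL) symL
  obtain ⟨-, hScR⟩ := half_integral (radial_integrable hR) symR
  have hsplit : ∫ p : EuclideanSpace ℝ (Fin 3),
      ‖p‖ / (Real.exp ((if 0 < p 0 then βL else βR) * ‖p‖) - 1)
      = (∫ p in S, ‖p‖ / (Real.exp ((if 0 < p 0 then βL else βR) * ‖p‖) - 1))
        + ∫ p in Sᶜ, ‖p‖ / (Real.exp ((if 0 < p 0 then βL else βR) * ‖p‖) - 1) :=
    (integral_add_compl MS hInt).symm
  have hS1 : (∫ p in S, ‖p‖ / (Real.exp ((if 0 < p 0 then βL else βR) * ‖p‖) - 1))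
      = ∫ p in S, ‖p‖ / (Real.exp (βL * ‖p‖) - 1) := by
    refine setIntegral_congr_fun MS (fun p hp => ?_)
    have hp' : 0 < p 0 := hp
    rw [if_pos hp']
  have hS2 : (∫ p in Sᶜ, ‖p‖ / (Real.exp ((if 0 < p 0 then βL else βR) * ‖p‖) - 1))
      = ∫ p in Sᶜ, ‖p‖ / (Real.exp (βR * ‖p‖) - 1) := by
    refine setIntegral_congr_fun MS.compl (fun p hp => ?_)
    have hp' : ¬ 0 < p 0 := hp
    rw [if_neg hp']
  rw [hsplit, hS1, hS2, hSL, hScR, radial_integral hL, radial_integral hR]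
  have hπ : π ≠ 0 := pi_ne_zero
  field_simp
  ring
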